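/- Let f = h + ḡ ∈ S_H^δ[α, β] with δ ≥ 0. Then for z = re^{iθ} ∈ 𝔻, |f(z)| ≤ r + r²(1-α)/(2^δ(2-α)) + ∫₀^r ((β+ξ)/(1+βξ))·(1 + (1-α)ξ/((2-α)2^{δ-1})) dξ. -/

import Mathlib

open Complex Metric MeasureTheory
open ComplexConjugate

lemma quad_bound {β t s : ℝ} (hβ0 : 0 ≤ β) (hβ1 : β < 1) (ht0 : 0 ≤ t)
    (hs0 : 0 ≤ s) (hs1 : s < 1)
    (hquad : (1 - β^2*t^2)*s^2 - 2*β*(1-t^2)*s + (β^2 - t^2) ≤ 0) :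
    s ≤ (β + t)/(1 + β*t) := by
  have hbt : 0 < 1 + β*t := by nlinarith
  rw [le_div_iff₀ hbt]
  by_contra hcon
  push_neg at hcon
  have he : 0 < s*(1+β*t) - (β+t) := by linarith
  have hbs : 0 ≤ 1 - β*s := by nlinarith
  have hf : s*(1+β*t) - (β+t) ≤ s*(1-β*t) - (β-t) := by nlinarith [mul_nonneg ht0 hbs]
  nlinarith [mul_pos he (he.trans_le hf)]

lemma schwarz_pick {w : ℂ → ℂ} (hw : DifferentiableOn ℂ w (ball 0 1))
    (hwlt : ∀ z ∈ ball (0:ℂ) 1, ‖w z‖ < 1) :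
    ∀ z ∈ ball (0:ℂ) 1, ‖w z‖ ≤ (‖w 0‖ + ‖z‖)/(1 + ‖w 0‖*‖z‖) := by
  set b := w 0 with hb
  have h0m : (0:ℂ) ∈ ball (0:ℂ) 1 := by simp
  have hbn : ‖b‖ < 1 := hwlt 0 h0m
  set φ : ℂ → ℂ := fun z => (w z - b)/(1 - conj b * w z) with hφ
  have hden : ∀ z ∈ ball (0:ℂ) 1, 1 - conj b * w z ≠ 0 := by
    intro z hz
    have : ‖conj b * w z‖ < 1 := by
      rw [norm_mul, RCLike.norm_conj]
      calc ‖b‖ * ‖w z‖ ≤ 1 * ‖w z‖ :=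
            mul_le_mul_of_nonneg_right hbn.le (norm_nonneg _)
        _ < 1 := by simpa using hwlt z hz
    intro hcontra
    rw [sub_eq_zero] at hcontra
    rw [← hcontra] at this
    simp at this
  have hid : ∀ u c : ℂ, normSq (1 - conj c * u) - normSq (u - c)
      = (1 - normSq u) * (1 - normSq c) := by
    intro u c
    simp only [normSq_apply, mul_re, mul_im, conj_re, conj_im, sub_re, sub_im,
      one_re, one_im]
    ring
  have hφd : DifferentiableOn ℂ φ (ball 0 1) :=
    (hw.sub (differentiableOn_const b)).div
      ((differentiableOn_const 1).sub ((differentiableOn_const (conj b)).mul hw)) hden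
  have hmaps : Set.MapsTo φ (ball 0 1) (ball 0 1) := by
    intro z hz
    rw [mem_ball_zero_iff]
    have hpos : (0:ℝ) < (1 - normSq (w z)) * (1 - normSq b) := by
      have h1 : normSq (w z) < 1 := by
        rw [← Complex.sq_norm]
        nlinarith [hwlt z hz, norm_nonneg (w z)]
      have h2 : normSq b < 1 := by
        rw [← Complex.sq_norm]
        nlinarith [hbn, norm_nonneg b]
      nlinarith
    have hlt : normSq (w z - b) < normSq (1 - conj b * w z) := by
      have := hid (w z) b; nlinarith
    have hnlt : ‖w z - b‖ < ‖1 - conj b * w z‖ := by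
      rw [Complex.norm_def, Complex.norm_def]
      exact Real.sqrt_lt_sqrt (normSq_nonneg _) hlt
    rw [hφ]
    simp only [norm_div]
    rw [div_lt_one (lt_of_le_of_lt (norm_nonneg _) hnlt)]
    exact hnlt
  have hφ0 : φ 0 = 0 := by simp [hφ, hb]
  intro z hz
  have hsch : ‖φ z‖ ≤ ‖z‖ := by
    apply Complex.norm_le_norm_of_mapsTo_ball hφd (hmaps.mono_right ball_subset_closedBall) hφ0
    simpa using (mem_ball_zero_iff.1 hz)
  have hdn : 0 < ‖1 - conj b * w z‖ := by
    rw [norm_pos_iff]; exact hden z hz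
  have hkey : ‖w z - b‖ ≤ ‖z‖ * ‖1 - conj b * w z‖ := by
    have h' : ‖φ z‖ ≤ ‖z‖ := by simpa using hsch
    rw [hφ] at h'
    simp only [norm_div] at h'
    exact (div_le_iff₀ hdn).1 h'
  have hsq : normSq (w z - b) ≤ ‖z‖^2 * normSq (1 - conj b * w z) := by
    have h2 := mul_self_le_mul_self (norm_nonneg (w z - b)) hkey
    rw [Complex.normSq_eq_norm_sq, Complex.normSq_eq_norm_sq]
    nlinarith [h2]
  have h1 : normSq (w z - b) = normSq (w z) - 2*(conj b * w z).re + normSq b := by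
    simp only [normSq_apply, mul_re, mul_im, conj_re, conj_im, sub_re, sub_im]
    ring
  have h2 : normSq (1 - conj b * w z) = 1 - 2*(conj b * w z).re + normSq b * normSq (w z) := by
    simp only [normSq_apply, mul_re, mul_im, conj_re, conj_im, sub_re, sub_im, one_re, one_im]
    ring
  have hx : (conj b * w z).re ≤ ‖b‖ * ‖w z‖ := by
    calc (conj b * w z).re ≤ ‖conj b * w z‖ := Complex.re_le_norm _
      _ = ‖b‖ * ‖w z‖ := by
          rw [norm_mul, RCLike.norm_conj]
  have hnsb : normSq b = ‖b‖^2 := by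
    rw [Complex.sq_norm]
  have hnsw : normSq (w z) = ‖w z‖^2 := by
    rw [Complex.sq_norm]
  have hzlt : ‖z‖ < 1 := mem_ball_zero_iff.1 hz
  rw [h1, h2, hnsb, hnsw] at hsq
  have h1t : (0:ℝ) ≤ 1 - ‖z‖^2 := by nlinarith [norm_nonneg z]
  apply quad_bound (norm_nonneg b) hbn (norm_nonneg z) (norm_nonneg (w z)) (hwlt z hz)
  nlinarith [hsq, mul_nonneg h1t (sub_nonneg.2 hx)]
lemma coef_bounds (α δ : ℝ) (hα0 : 0 ≤ α) (hα1 : α < 1) (hδ : 0 ≤ δ)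
    (a : ℕ → ℂ)
    (hsb : Summable fun n : ℕ =>
      ((n : ℝ) + 2) ^ δ * (((n : ℝ) + 2 - α) / (1 - α)) * ‖a (n + 2)‖)
    (hcoef : ∑' n : ℕ,
      ((n : ℝ) + 2) ^ δ * (((n : ℝ) + 2 - α) / (1 - α)) * ‖a (n + 2)‖ ≤ 1) :
    (Summable fun n : ℕ => ‖a (n+2)‖) ∧
    (∑' n : ℕ, ‖a (n+2)‖) ≤ (1 - α) / ((2:ℝ)^δ * (2 - α)) ∧
    (Summable fun n : ℕ => ((n:ℝ)+2) * ‖a (n+2)‖) ∧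
    (∑' n : ℕ, ((n:ℝ)+2) * ‖a (n+2)‖) ≤ 2 * ((1 - α) / ((2:ℝ)^δ * (2 - α))) := by
  set C : ℝ := (1 - α) / ((2:ℝ)^δ * (2 - α)) with hCdef
  have h2δ : (0:ℝ) < (2:ℝ)^δ := Real.rpow_pos_of_pos two_pos δ
  have h2α : (0:ℝ) < 2 - α := by linarith
  have h1α : (0:ℝ) < 1 - α := by linarith
  have hC : 0 < C := by positivity
  have hrp : ∀ n : ℕ, (2:ℝ)^δ ≤ ((n:ℝ)+2)^δ := fun n =>
    Real.rpow_le_rpow (by norm_num) (by have : (0:ℝ) ≤ (n:ℝ) := n.cast_nonneg; linarith) hδ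
  have hterm1 : ∀ n : ℕ, ‖a (n+2)‖ ≤
      C * (((n:ℝ)+2)^δ * ((((n:ℝ)+2-α)) / (1 - α)) * ‖a (n+2)‖) := by
    intro n
    have hn0 : (0:ℝ) ≤ (n:ℝ) := n.cast_nonneg
    have key : 1 ≤ C * (((n:ℝ)+2)^δ * ((((n:ℝ)+2-α)) / (1 - α))) := by
      rw [hCdef]
      rw [div_mul_eq_mul_div, le_div_iff₀ (by positivity)]
      have step1 : (2:ℝ)^δ * (2-α) ≤ ((n:ℝ)+2)^δ * (2-α) :=
        mul_le_mul_of_nonneg_right (hrp n) h2α.le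
      have step2 : ((n:ℝ)+2)^δ * (2-α) ≤ ((n:ℝ)+2)^δ * ((n:ℝ)+2-α) :=
        mul_le_mul_of_nonneg_left (by linarith) (by positivity)
      calc 1 * ((2:ℝ)^δ * (2-α)) = (2:ℝ)^δ * (2-α) := one_mul _
        _ ≤ ((n:ℝ)+2)^δ * ((n:ℝ)+2-α) := step1.trans step2
        _ = (1-α) * (((n:ℝ)+2)^δ * (((n:ℝ)+2-α)/(1-α))) := by field_simp
    calc ‖a (n+2)‖ = 1 * ‖a (n+2)‖ := (one_mul _).symm
      _ ≤ C * (((n:ℝ)+2)^δ * ((((n:ℝ)+2-α)) / (1 - α))) * ‖a (n+2)‖ :=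
          mul_le_mul_of_nonneg_right key (norm_nonneg _)
      _ = C * (((n:ℝ)+2)^δ * ((((n:ℝ)+2-α)) / (1 - α)) * ‖a (n+2)‖) := by ring
  have hterm2 : ∀ n : ℕ, ((n:ℝ)+2) * ‖a (n+2)‖ ≤
      (2*C) * (((n:ℝ)+2)^δ * ((((n:ℝ)+2-α)) / (1 - α)) * ‖a (n+2)‖) := by
    intro n
    have hn0 : (0:ℝ) ≤ (n:ℝ) := n.cast_nonneg
    have key : ((n:ℝ)+2) ≤ 2*C * (((n:ℝ)+2)^δ * ((((n:ℝ)+2-α)) / (1 - α))) := by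
      rw [hCdef]
      rw [show 2 * ((1-α)/((2:ℝ)^δ*(2-α))) * (((n:ℝ)+2)^δ * ((((n:ℝ)+2-α)) / (1 - α)))
          = (2 * (((n:ℝ)+2)^δ * ((n:ℝ)+2-α))) / ((2:ℝ)^δ*(2-α)) from by
        field_simp]
      rw [le_div_iff₀ (by positivity)]
      have step2 : ((n:ℝ)+2) * (2-α) ≤ 2*((n:ℝ)+2-α) := by nlinarith
      have step1 : ((n:ℝ)+2) * ((2:ℝ)^δ * (2-α)) ≤ ((n:ℝ)+2)^δ * (((n:ℝ)+2) * (2-α)) := by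
        have := mul_le_mul_of_nonneg_right (hrp n) (by positivity : (0:ℝ) ≤ ((n:ℝ)+2)*(2-α))
        nlinarith [this]
      calc ((n:ℝ)+2) * ((2:ℝ)^δ * (2-α)) ≤ ((n:ℝ)+2)^δ * (((n:ℝ)+2) * (2-α)) := step1
        _ ≤ ((n:ℝ)+2)^δ * (2*((n:ℝ)+2-α)) :=
            mul_le_mul_of_nonneg_left step2 (by positivity)
        _ = 2 * (((n:ℝ)+2)^δ * ((n:ℝ)+2-α)) := by ring
    calc ((n:ℝ)+2) * ‖a (n+2)‖
        ≤ 2*C * (((n:ℝ)+2)^δ * ((((n:ℝ)+2-α)) / (1 - α))) * ‖a (n+2)‖ :=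
          mul_le_mul_of_nonneg_right key (norm_nonneg _)
      _ = (2*C) * (((n:ℝ)+2)^δ * ((((n:ℝ)+2-α)) / (1 - α)) * ‖a (n+2)‖) := by ring
  have hs1 : Summable fun n : ℕ => ‖a (n+2)‖ :=
    Summable.of_nonneg_of_le (fun n => norm_nonneg _) hterm1 (hsb.mul_left C)
  have hs2 : Summable fun n : ℕ => ((n:ℝ)+2) * ‖a (n+2)‖ :=
    Summable.of_nonneg_of_le (fun n => by positivity) hterm2 (hsb.mul_left (2*C))
  refine ⟨hs1, ?_, hs2, ?_⟩
  · calc (∑' n : ℕ, ‖a (n+2)‖)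
        ≤ ∑' n : ℕ, C * (((n:ℝ)+2)^δ * ((((n:ℝ)+2-α)) / (1 - α)) * ‖a (n+2)‖) :=
          Summable.tsum_le_tsum hterm1 hs1 (hsb.mul_left C)
      _ = C * ∑' n : ℕ, ((n:ℝ)+2)^δ * ((((n:ℝ)+2-α)) / (1 - α)) * ‖a (n+2)‖ :=
          tsum_mul_left
      _ ≤ C * 1 := mul_le_mul_of_nonneg_left hcoef hC.le
      _ = C := mul_one _
  · calc (∑' n : ℕ, ((n:ℝ)+2) * ‖a (n+2)‖)
        ≤ ∑' n : ℕ, (2*C) * (((n:ℝ)+2)^δ * ((((n:ℝ)+2-α)) / (1 - α)) * ‖a (n+2)‖) :=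
          Summable.tsum_le_tsum hterm2 hs2 (hsb.mul_left (2*C))
      _ = (2*C) * ∑' n : ℕ, ((n:ℝ)+2)^δ * ((((n:ℝ)+2-α)) / (1 - α)) * ‖a (n+2)‖ :=
          tsum_mul_left
      _ ≤ (2*C) * 1 := mul_le_mul_of_nonneg_left hcoef (by positivity)
      _ = 2*C := mul_one _
lemma hderiv_bound (a : ℕ → ℂ) (h : ℂ → ℂ) (ha0 : a 0 = 0) (ha1 : a 1 = 1)
    (hreph : ∀ z ∈ ball (0:ℂ) 1, HasSum (fun n : ℕ => a n * z ^ n) (h z))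
    (hs2 : Summable fun n : ℕ => ((n:ℝ)+2) * ‖a (n+2)‖) (M : ℝ)
    (hts2 : (∑' n : ℕ, ((n:ℝ)+2) * ‖a (n+2)‖) ≤ M) :
    ∀ ξ ∈ ball (0:ℂ) 1, ∃ D : ℂ, HasDerivAt h D ξ ∧ ‖D‖ ≤ 1 + M * ‖ξ‖ := by
  have hu : Summable (fun n : ℕ => (n:ℝ) * ‖a n‖) := by
    apply (summable_nat_add_iff 2).1
    have : (fun n : ℕ => ((n+2 : ℕ):ℝ) * ‖a (n+2)‖)
        = fun n : ℕ => ((n:ℝ)+2) * ‖a (n+2)‖ := by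
      funext n; push_cast; ring
    rw [this]; exact hs2
  have hnb : ∀ (n : ℕ) (y : ℂ), y ∈ ball (0:ℂ) 1 →
      ‖a n * ((n:ℂ) * y^(n-1))‖ ≤ (n:ℝ) * ‖a n‖ := by
    intro n y hy
    have hy1 : ‖y‖ ≤ 1 := (mem_ball_zero_iff.1 hy).le
    rw [norm_mul, norm_mul, norm_pow, Complex.norm_natCast]
    have : ‖y‖^(n-1) ≤ 1 := pow_le_one₀ (norm_nonneg y) hy1
    calc ‖a n‖ * ((n:ℝ) * ‖y‖^(n-1)) ≤ ‖a n‖ * ((n:ℝ) * 1) := by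
          apply mul_le_mul_of_nonneg_left _ (norm_nonneg _)
          exact mul_le_mul_of_nonneg_left this (n.cast_nonneg)
      _ = (n:ℝ) * ‖a n‖ := by ring
  intro ξ hξ
  have hd : HasDerivAt (fun y => ∑' n : ℕ, a n * y^n)
      (∑' n : ℕ, a n * ((n:ℂ) * ξ^(n-1))) ξ := by
    apply hasDerivAt_tsum_of_isPreconnected hu isOpen_ball
      (convex_ball (0:ℂ) 1).isPreconnected
      (fun n y hy => (hasDerivAt_pow n y).const_mul (a n)) hnb
      (by simp : (0:ℂ) ∈ ball (0:ℂ) 1) _ hξ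
    have : (fun n : ℕ => a n * (0:ℂ)^n) = fun _ => 0 := by
      funext n
      cases n with
      | zero => simp [ha0]
      | succ m => simp
    rw [this]; exact summable_zero
  have hev : h =ᶠ[nhds ξ] fun y => ∑' n : ℕ, a n * y^n :=
    Filter.eventuallyEq_of_mem (isOpen_ball.mem_nhds hξ)
      (fun y hy => ((hreph y hy).tsum_eq).symm)
  refine ⟨_, hd.congr_of_eventuallyEq hev, ?_⟩
  set D := ∑' n : ℕ, a n * ((n:ℂ) * ξ^(n-1)) with hD
  have hsD : Summable (fun n : ℕ => a n * ((n:ℂ) * ξ^(n-1))) := by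
    apply Summable.of_norm
    exact Summable.of_nonneg_of_le (fun n => norm_nonneg _) (fun n => hnb n ξ hξ) hu
  have hshift : HasSum (fun n : ℕ => a (n+2) * (((n+2:ℕ):ℂ) * ξ^(n+2-1)))
      (D - ∑ i ∈ Finset.range 2, a i * ((i:ℂ) * ξ^(i-1))) :=
    (hasSum_nat_add_iff' 2).2 hsD.hasSum
  have hrange : (∑ i ∈ Finset.range 2, a i * ((i:ℂ) * ξ^(i-1))) = 1 := by
    rw [Finset.sum_range_succ, Finset.sum_range_one, ha0, ha1]
    simp
  rw [hrange] at hshift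
  have hnorm1 : ‖D - 1‖ ≤ M * ‖ξ‖ := by
    have hsn : Summable (fun n : ℕ => ‖a (n+2) * (((n+2:ℕ):ℂ) * ξ^(n+2-1))‖) := by
      apply Summable.of_nonneg_of_le (fun n => norm_nonneg _)
        (fun n => hnb (n+2) ξ hξ)
      apply (summable_nat_add_iff 2).2 hu
    have h1 : ‖D - 1‖ ≤ ∑' n : ℕ, ‖a (n+2) * (((n+2:ℕ):ℂ) * ξ^(n+2-1))‖ := by
      rw [← hshift.tsum_eq]
      exact norm_tsum_le_tsum_norm hsn
    have h2 : ∀ n : ℕ, ‖a (n+2) * (((n+2:ℕ):ℂ) * ξ^(n+2-1))‖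
        ≤ ((n:ℝ)+2) * ‖a (n+2)‖ * ‖ξ‖ := by
      intro n
      rw [norm_mul, norm_mul, norm_pow, Complex.norm_natCast]
      have hy1 : ‖ξ‖ ≤ 1 := (mem_ball_zero_iff.1 hξ).le
      have hp : ‖ξ‖^(n+2-1) ≤ ‖ξ‖ := by
        have : n+2-1 = n+1 := rfl
        rw [this, pow_succ]
        calc ‖ξ‖^n * ‖ξ‖ ≤ 1 * ‖ξ‖ :=
              mul_le_mul_of_nonneg_right (pow_le_one₀ (norm_nonneg ξ) hy1) (norm_nonneg ξ)
          _ = ‖ξ‖ := one_mul _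
      have : ((n+2:ℕ):ℝ) = (n:ℝ)+2 := by push_cast; ring
      rw [this]
      calc ‖a (n+2)‖ * (((n:ℝ)+2) * ‖ξ‖^(n+2-1))
          ≤ ‖a (n+2)‖ * (((n:ℝ)+2) * ‖ξ‖) := by
            apply mul_le_mul_of_nonneg_left _ (norm_nonneg _)
            exact mul_le_mul_of_nonneg_left hp (by positivity)
        _ = ((n:ℝ)+2) * ‖a (n+2)‖ * ‖ξ‖ := by ring
    have h3 : (∑' n : ℕ, ‖a (n+2) * (((n+2:ℕ):ℂ) * ξ^(n+2-1))‖)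
        ≤ ∑' n : ℕ, ((n:ℝ)+2) * ‖a (n+2)‖ * ‖ξ‖ :=
      Summable.tsum_le_tsum h2 hsn (hs2.mul_right ‖ξ‖)
    have h4 : (∑' n : ℕ, ((n:ℝ)+2) * ‖a (n+2)‖ * ‖ξ‖)
        = (∑' n : ℕ, ((n:ℝ)+2) * ‖a (n+2)‖) * ‖ξ‖ := tsum_mul_right
    calc ‖D - 1‖ ≤ ∑' n : ℕ, ‖a (n+2) * (((n+2:ℕ):ℂ) * ξ^(n+2-1))‖ := h1
      _ ≤ (∑' n : ℕ, ((n:ℝ)+2) * ‖a (n+2)‖) * ‖ξ‖ := h3.trans_eq h4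
      _ ≤ M * ‖ξ‖ := mul_le_mul_of_nonneg_right hts2 (norm_nonneg ξ)
  calc ‖D‖ = ‖1 + (D - 1)‖ := by ring_nf
    _ ≤ ‖(1:ℂ)‖ + ‖D - 1‖ := norm_add_le _ _
    _ ≤ 1 + M * ‖ξ‖ := by rw [norm_one]; linarith
theorem f_growth_upper
    (α β δ : ℝ) (hα0 : 0 ≤ α) (hα1 : α < 1) (hβ0 : 0 ≤ β) (hβ1 : β < 1)
    (hδ : 0 ≤ δ)
    (h g w : ℂ → ℂ) (a : ℕ → ℂ)
    (ha0 : a 0 = 0) (ha1 : a 1 = 1)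
    (hreph : ∀ z ∈ ball (0 : ℂ) 1, HasSum (fun n : ℕ => a n * z ^ n) (h z))
    (hsb : Summable fun n : ℕ =>
      ((n : ℝ) + 2) ^ δ * (((n : ℝ) + 2 - α) / (1 - α)) * ‖a (n + 2)‖)
    (hcoef : ∑' n : ℕ,
      ((n : ℝ) + 2) ^ δ * (((n : ℝ) + 2 - α) / (1 - α)) * ‖a (n + 2)‖ ≤ 1)
    (hg : DifferentiableOn ℂ g (ball (0 : ℂ) 1)) (hg0 : g 0 = 0)
    (hw : DifferentiableOn ℂ w (ball (0 : ℂ) 1))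
    (hwlt : ∀ z ∈ ball (0 : ℂ) 1, ‖w z‖ < 1)
    (hw0 : ‖w 0‖ = β)
    (hdil : ∀ z ∈ ball (0 : ℂ) 1, deriv g z = w z * deriv h z)
    (f : ℂ → ℂ)
    (hf : ∀ z ∈ ball (0 : ℂ) 1, f z = h z + (starRingEnd ℂ) (g z)) :
    ∀ z ∈ ball (0 : ℂ) 1,
      ‖f z‖ ≤ ‖z‖ + ‖z‖ ^ 2 * (1 - α) / ((2 : ℝ) ^ δ * (2 - α)) +
        ∫ ξ in Set.Ioo (0 : ℝ) ‖z‖,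
          ((β + ξ) / (1 + β * ξ)) *
            (1 + (1 - α) * ξ / ((2 - α) * (2 : ℝ) ^ (δ - 1))) := by
  obtain ⟨hs1, hts1, hs2, hts2⟩ := coef_bounds α δ hα0 hα1 hδ a hsb hcoef
  set C : ℝ := (1 - α) / ((2:ℝ)^δ * (2 - α)) with hCdef
  have h2δ : (0:ℝ) < (2:ℝ)^δ := Real.rpow_pos_of_pos two_pos δ
  have h2α : (0:ℝ) < 2 - α := by linarith
  have h1α : (0:ℝ) < 1 - α := by linarith
  have hC : 0 < C := by positivity
  -- derivative bounds for h
  have hhd := hderiv_bound a h ha0 ha1 hreph hs2 (2*C) hts2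
  have hhdiff : DifferentiableOn ℂ h (ball (0:ℂ) 1) := fun ξ hξ =>
    ((hhd ξ hξ).choose_spec.1.differentiableAt).differentiableWithinAt
  have hdb : ∀ ξ ∈ ball (0:ℂ) 1, ‖deriv h ξ‖ ≤ 1 + 2*C*‖ξ‖ := by
    intro ξ hξ
    obtain ⟨D, hD, hDb⟩ := hhd ξ hξ
    rwa [hD.deriv]
  -- Schwarz-Pick for w
  have hsp := schwarz_pick hw hwlt
  -- bound on deriv g
  have hgb : ∀ ξ ∈ ball (0:ℂ) 1,
      ‖deriv g ξ‖ ≤ (β + ‖ξ‖)/(1 + β*‖ξ‖) * (1 + 2*C*‖ξ‖) := by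
    intro ξ hξ
    rw [hdil ξ hξ, norm_mul]
    have h1 : ‖w ξ‖ ≤ (β + ‖ξ‖)/(1 + β*‖ξ‖) := by
      have := hsp ξ hξ; rwa [hw0] at this
    apply mul_le_mul h1 (hdb ξ hξ) (norm_nonneg _)
    positivity
  intro z hz
  have hr1 : ‖z‖ < 1 := mem_ball_zero_iff.1 hz
  set r : ℝ := ‖z‖ with hrdef
  have hr0 : 0 ≤ r := norm_nonneg z
  -- bound on ‖h z‖
  have hhz : ‖h z‖ ≤ r + r^2 * C := by
    have hshift : HasSum (fun n : ℕ => a (n+2) * z^(n+2))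
        (h z - ∑ i ∈ Finset.range 2, a i * z^i) :=
      (hasSum_nat_add_iff' 2).2 (hreph z hz)
    have hrange : (∑ i ∈ Finset.range 2, a i * z^i) = z := by
      rw [Finset.sum_range_succ, Finset.sum_range_one, ha0, ha1]
      simp
    rw [hrange] at hshift
    have hbnd : ∀ n : ℕ, ‖a (n+2) * z^(n+2)‖ ≤ ‖a (n+2)‖ * r^2 := by
      intro n
      rw [norm_mul, norm_pow]
      apply mul_le_mul_of_nonneg_left _ (norm_nonneg _)
      calc r^(n+2) = r^n * r^2 := by ring
        _ ≤ 1 * r^2 := by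
            apply mul_le_mul_of_nonneg_right (pow_le_one₀ hr0 hr1.le) (by positivity)
        _ = r^2 := one_mul _
    have hsn : Summable (fun n : ℕ => ‖a (n+2) * z^(n+2)‖) :=
      Summable.of_nonneg_of_le (fun n => norm_nonneg _) hbnd (hs1.mul_right (r^2))
    have h1 : ‖h z - z‖ ≤ ∑' n : ℕ, ‖a (n+2) * z^(n+2)‖ := by
      rw [← hshift.tsum_eq]; exact norm_tsum_le_tsum_norm hsn
    have h2 : (∑' n : ℕ, ‖a (n+2) * z^(n+2)‖) ≤ ∑' n : ℕ, ‖a (n+2)‖ * r^2 :=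
      Summable.tsum_le_tsum hbnd hsn (hs1.mul_right (r^2))
    have h3 : (∑' n : ℕ, ‖a (n+2)‖ * r^2) = (∑' n : ℕ, ‖a (n+2)‖) * r^2 := tsum_mul_right
    have h4 : (∑' n : ℕ, ‖a (n+2)‖) * r^2 ≤ C * r^2 :=
      mul_le_mul_of_nonneg_right hts1 (by positivity)
    calc ‖h z‖ = ‖z + (h z - z)‖ := by ring_nf
      _ ≤ ‖z‖ + ‖h z - z‖ := norm_add_le _ _
      _ ≤ r + r^2 * C := by
          have := (h1.trans (h2.trans_eq h3)).trans h4
          rw [← hrdef]; linarith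
  -- the integrand function
  set ψ : ℝ → ℝ := fun x => (β + x)/(1 + β*x) * (1 + 2*C*x) with hψdef
  -- continuity facts
  have hgc : ContinuousOn (deriv g) (ball (0:ℂ) 1) :=
    ((hg.analyticOnNhd isOpen_ball).deriv).continuousOn
  have hmem : ∀ t ∈ Set.uIcc (0:ℝ) 1, t • z ∈ ball (0:ℂ) 1 := by
    intro t ht
    rw [Set.uIcc_of_le (zero_le_one)] at ht
    rw [mem_ball_zero_iff, norm_smul, Real.norm_eq_abs, _root_.abs_of_nonneg ht.1]
    calc t * ‖z‖ ≤ 1 * ‖z‖ := mul_le_mul_of_nonneg_right ht.2 hr0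
      _ < 1 := by rw [one_mul]; exact hr1
  have hγc : ContinuousOn (fun t : ℝ => deriv g (t • z)) (Set.uIcc (0:ℝ) 1) :=
    hgc.comp ((continuous_id.smul continuous_const).continuousOn) hmem
  have hGc : ContinuousOn (fun t : ℝ => z * deriv g (t • z)) (Set.uIcc (0:ℝ) 1) :=
    continuousOn_const.mul hγc
  have hGint : IntervalIntegrable (fun t : ℝ => z * deriv g (t • z)) volume 0 1 :=
    hGc.intervalIntegrable
  -- FTC
  have hder : ∀ t ∈ Set.uIcc (0:ℝ) 1,
      HasDerivAt (fun s : ℝ => g (s • z)) (z * deriv g (t • z)) t := by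
    intro t ht
    have hmem' := hmem t ht
    have hgd : HasDerivAt g (deriv g (t • z)) (t • z) :=
      ((hg.differentiableAt (isOpen_ball.mem_nhds hmem')).hasDerivAt)
    have hγd : HasDerivAt (fun s : ℝ => s • z) ((1:ℝ) • z) t :=
      (hasDerivAt_id t).smul_const z
    have := HasDerivAt.scomp (𝕜 := ℝ) t hgd hγd
    simpa [one_smul, smul_eq_mul, mul_comm, Function.comp_def] using this
  have hgz : g z = ∫ t in (0:ℝ)..1, z * deriv g (t • z) := by
    have := intervalIntegral.integral_eq_sub_of_hasDerivAt hder hGint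
    rw [this, one_smul, zero_smul, hg0, sub_zero]
  -- bound ‖g z‖
  have hnormbound : ∀ t ∈ Set.Icc (0:ℝ) 1, ‖z * deriv g (t • z)‖ ≤ r * ψ (r * t) := by
    intro t ht
    have ht' : t ∈ Set.uIcc (0:ℝ) 1 := by rw [Set.uIcc_of_le zero_le_one]; exact ht
    have hmem' := hmem t ht'
    have hnt : ‖t • z‖ = r * t := by
      rw [norm_smul, Real.norm_eq_abs, _root_.abs_of_nonneg ht.1, ← hrdef, mul_comm]
    rw [norm_mul, ← hrdef]
    calc r * ‖deriv g (t • z)‖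
        ≤ r * ((β + ‖t • z‖)/(1 + β*‖t • z‖) * (1 + 2*C*‖t • z‖)) :=
          mul_le_mul_of_nonneg_left (hgb _ hmem') hr0
      _ = r * ψ (r * t) := by rw [hnt, hψdef]
  have hψc : ContinuousOn (fun t : ℝ => r * ψ (r * t)) (Set.uIcc (0:ℝ) 1) := by
    apply continuousOn_const.mul
    apply ContinuousOn.mul
    · apply ContinuousOn.div
      · fun_prop
      · fun_prop
      · intro t ht
        rw [Set.uIcc_of_le zero_le_one] at ht
        have h1 : 0 ≤ β * (r * t) := mul_nonneg hβ0 (mul_nonneg hr0 ht.1)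
        exact ne_of_gt (by linarith)
    · fun_prop
  have hgint : ‖g z‖ ≤ ∫ t in (0:ℝ)..1, r * ψ (r * t) := by
    rw [hgz]
    calc ‖∫ t in (0:ℝ)..1, z * deriv g (t • z)‖
        ≤ ∫ t in (0:ℝ)..1, ‖z * deriv g (t • z)‖ :=
          intervalIntegral.norm_integral_le_integral_norm zero_le_one
      _ ≤ ∫ t in (0:ℝ)..1, r * ψ (r * t) := by
          apply intervalIntegral.integral_mono_on zero_le_one
            hGint.norm (hψc.intervalIntegrable) hnormbound
  -- change of variables
  have hchg : (∫ t in (0:ℝ)..1, r * ψ (r * t)) = ∫ x in (0:ℝ)..r, ψ x := by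
    rw [intervalIntegral.integral_const_mul, ← smul_eq_mul,
      intervalIntegral.smul_integral_comp_mul_left ψ r, mul_zero, mul_one]
  -- identify with Ioo integral
  have hIoo : (∫ x in (0:ℝ)..r, ψ x) = ∫ x in Set.Ioo (0:ℝ) r, ψ x := by
    rw [intervalIntegral.integral_of_le hr0, integral_Ioc_eq_integral_Ioo]
  -- integrand equality
  have hfun : (fun ξ : ℝ => ((β + ξ) / (1 + β * ξ)) *
      (1 + (1 - α) * ξ / ((2 - α) * (2 : ℝ) ^ (δ - 1)))) = ψ := by
    funext ξ
    rw [hψdef]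
    have h2pow : (2:ℝ) ^ (δ - 1) = (2:ℝ)^δ / 2 := by
      rw [Real.rpow_sub two_pos, Real.rpow_one]
    rw [h2pow, hCdef]
    congr 1
    field_simp
  -- assemble
  have hfz : ‖f z‖ ≤ ‖h z‖ + ‖g z‖ := by
    rw [hf z hz]
    calc ‖h z + (starRingEnd ℂ) (g z)‖ ≤ ‖h z‖ + ‖(starRingEnd ℂ) (g z)‖ := norm_add_le _ _
      _ = ‖h z‖ + ‖g z‖ := by rw [RCLike.norm_conj]
  rw [hfun]
  have hC2 : r ^ 2 * (1 - α) / ((2 : ℝ) ^ δ * (2 - α)) = r^2 * C := by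
    rw [hCdef]; ring
  rw [hC2]
  have := hgint.trans_eq (hchg.trans hIoo)
  linarith [hhz, hfz, this]
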